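/- The single-interval output density P(t) = ∫₀^Δ g(s) F(t, s) ds + a·F(t, Δ) is continuous at every point of (0, Δ) ∪ (Δ, τ), and its one-sided limits at t = Δ exist with (limit from below) − (limit from above) = a · λ²·Δ·exp(−λ·Δ) > 0; i.e., the output interspike-interval probability density has a jump discontinuity exactly at the feedback delay t = Δ. -/

import Mathlib

open Real Set Filter MeasureTheory

/-- Conditional ISI density `F t s` given time-to-live `s` of the feedback impulse. -/
noncomputable def F (lam τ t s : ℝ) : ℝ :=
  if 0 < t ∧ t < s then lam ^ 2 * t * Real.exp (-lam * t)
  else if s ≤ t ∧ t ≤ s + τ then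
    (1 + lam * s) * Real.exp (-lam * s) * (lam ^ 2 * (t - s) * Real.exp (-lam * (t - s)))
  else 0

/-- Regular part of the stationary time-to-live density. -/
noncomputable def g (lam A B s : ℝ) : ℝ := A + B * Real.exp (2 * lam * s)

/-- Weight of the singular (Dirac) part of the stationary time-to-live distribution. -/
noncomputable def aC (lam Δ : ℝ) : ℝ :=
  4 * Real.exp (2 * lam * Δ) / ((3 + 2 * lam * Δ) * Real.exp (2 * lam * Δ) + 1)

/-- `T t p q = Σ_{j=p}^{q-1} t_j` (empty sums are `0`). -/
def T {n : ℕ} (t : Fin n → ℝ) (p q : ℕ) : ℝ :=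
  ∑ j : Fin n, if p ≤ (j : ℕ) ∧ (j : ℕ) < q then t j else 0

/-- `Ilow lam Δ τ A B i t` is the term `I_i`, `0 ≤ i ≤ m-1`, of the joint ISI density. -/
noncomputable def Ilow (lam Δ τ A B : ℝ) {m : ℕ} (i : ℕ) (t : Fin (m + 1) → ℝ) : ℝ :=
  (∏ k : Fin (m + 1), if i + 1 ≤ (k : ℕ) then F lam τ (t k) (Δ - T t (i + 1) (k : ℕ)) else 1) *
    ∫ s in T t 0 i..T t 0 (i + 1),
      g lam A B s *
        ∏ k : Fin (m + 1), if (k : ℕ) ≤ i then F lam τ (t k) (s - T t 0 (k : ℕ)) else 1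

/-- `Itop lam Δ τ A B t` is the term `I_m` of the joint ISI density. -/
noncomputable def Itop (lam Δ τ A B : ℝ) {m : ℕ} (t : Fin (m + 1) → ℝ) : ℝ :=
  (∫ s in T t 0 m..Δ, g lam A B s * ∏ k : Fin (m + 1), F lam τ (t k) (s - T t 0 (k : ℕ)))
    + aC lam Δ * ∏ k : Fin (m + 1), F lam τ (t k) (Δ - T t 0 (k : ℕ))

/-- `J lam Δ τ A B t = Σ_{i=0}^{m} I_i(t)`, the joint density of `m+1` consecutive ISIs. -/
noncomputable def J (lam Δ τ A B : ℝ) {m : ℕ} (t : Fin (m + 1) → ℝ) : ℝ :=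
  (∑ i ∈ Finset.range m, Ilow lam Δ τ A B i t) + Itop lam Δ τ A B t

-- measurability of F in s
lemma F_meas (lam τ t : ℝ) : Measurable (fun s => F lam τ t s) := by
  unfold F
  apply Measurable.ite
  · simp only [setOf_and]
    exact (MeasurableSet.const _).inter measurableSet_Ioi
  · exact measurable_const
  apply Measurable.ite
  · simp only [setOf_and]
    have : {s : ℝ | t ≤ s + τ} = Ici (t - τ) := by ext x; simp [sub_le_iff_le_add]
    exact measurableSet_Iic.inter (this ▸ measurableSet_Ici)
  · fun_prop
  · exact measurable_const

-- continuity of F in t away from t = s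
lemma F_contAt (lam τ s t₀ : ℝ) (hs : 0 < s) (h0 : 0 < t₀) (htτ : t₀ < τ) (hne : t₀ ≠ s) :
    ContinuousAt (fun t => F lam τ t s) t₀ := by
  rcases hne.lt_or_gt with h | h
  · have hev : ∀ᶠ t in nhds t₀, F lam τ t s = lam ^ 2 * t * Real.exp (-lam * t) := by
      filter_upwards [Ioo_mem_nhds h0 h] with t ht
      simp [F, ht.1, ht.2]
    have hc : ContinuousAt (fun t : ℝ => lam ^ 2 * t * Real.exp (-lam * t)) t₀ := by fun_prop
    exact hc.congr (Filter.EventuallyEq.symm hev)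
  · have hev : ∀ᶠ t in nhds t₀, F lam τ t s =
        (1 + lam * s) * Real.exp (-lam * s) * (lam ^ 2 * (t - s) * Real.exp (-lam * (t - s))) := by
      filter_upwards [Ioo_mem_nhds h (lt_of_lt_of_le htτ (by linarith))] with t ht
      have h1 : ¬ (0 < t ∧ t < s) := by push_neg; intro _; exact le_of_lt ht.1
      have h2 : s ≤ t ∧ t ≤ s + τ := ⟨le_of_lt ht.1, le_of_lt (by linarith [ht.2])⟩
      simp [F, h1, h2]
    have hc : ContinuousAt (fun t : ℝ =>
        (1 + lam * s) * Real.exp (-lam * s) * (lam ^ 2 * (t - s) * Real.exp (-lam * (t - s)))) t₀ := by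
      fun_prop
    exact hc.congr (Filter.EventuallyEq.symm hev)

lemma F_bound (lam τ Δ s t M : ℝ) (hlam : 0 < lam) (hM : 0 ≤ M)
    (hs : 0 < s) (hsΔ : s ≤ Δ) (htM : t ≤ M) :
    |F lam τ t s| ≤ (1 + lam * Δ) * lam ^ 2 * M := by
  have hΔ : 0 < Δ := lt_of_lt_of_le hs hsΔ
  unfold F
  split_ifs with h1 h2
  · have he : Real.exp (-lam * t) ≤ 1 := Real.exp_le_one_iff.2 (by nlinarith [h1.1])
    have hnn : 0 ≤ lam ^ 2 * t * Real.exp (-lam * t) :=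
      mul_nonneg (mul_nonneg (sq_nonneg lam) h1.1.le) (Real.exp_pos _).le
    rw [abs_of_nonneg hnn]
    nlinarith [mul_nonneg (mul_nonneg (sq_nonneg lam) h1.1.le) (sub_nonneg.2 he),
      mul_nonneg (sq_nonneg lam) (sub_nonneg.2 htM),
      mul_nonneg (mul_nonneg hlam.le hΔ.le) (mul_nonneg (sq_nonneg lam) hM)]
  · have hts : 0 ≤ t - s := by linarith [h2.1]
    have he1 : Real.exp (-lam * s) ≤ 1 := Real.exp_le_one_iff.2 (by nlinarith)
    have he2 : Real.exp (-lam * (t - s)) ≤ 1 := Real.exp_le_one_iff.2 (by nlinarith)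
    have hnn : 0 ≤ (1 + lam * s) * Real.exp (-lam * s) *
        (lam ^ 2 * (t - s) * Real.exp (-lam * (t - s))) := by positivity
    rw [abs_of_nonneg hnn]
    have h3 : (1 + lam * s) * Real.exp (-lam * s) ≤ 1 + lam * Δ := by
      nlinarith [mul_nonneg (by nlinarith : (0:ℝ) ≤ 1 + lam * s) (sub_nonneg.2 he1),
        mul_nonneg hlam.le (by linarith : (0:ℝ) ≤ Δ - s)]
    have h4 : lam ^ 2 * (t - s) * Real.exp (-lam * (t - s)) ≤ lam ^ 2 * M := by
      nlinarith [mul_nonneg (mul_nonneg (sq_nonneg lam) hts) (sub_nonneg.2 he2),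
        mul_nonneg (sq_nonneg lam) (by linarith : (0:ℝ) ≤ M - (t - s))]
    calc (1 + lam * s) * Real.exp (-lam * s) *
          (lam ^ 2 * (t - s) * Real.exp (-lam * (t - s)))
        ≤ (1 + lam * Δ) * (lam ^ 2 * M) := by
          apply mul_le_mul h3 h4 (by positivity) (by positivity)
      _ = (1 + lam * Δ) * lam ^ 2 * M := by ring
  · simp only [abs_zero]; positivity

lemma int_contAt (lam Δ τ A B t₀ : ℝ) (hlam : 0 < lam) (hΔ : 0 < Δ)
    (h0 : 0 < t₀) (hτ : t₀ < τ) :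
    ContinuousAt (fun t => ∫ s in (0 : ℝ)..Δ, g lam A B s * F lam τ t s) t₀ := by
  have huIoc : Set.uIoc (0 : ℝ) Δ = Ioc 0 Δ := uIoc_of_le hΔ.le
  set C : ℝ := (|A| + |B| * Real.exp (2 * lam * Δ)) * ((1 + lam * Δ) * lam ^ 2 * (t₀ + 1))
    with hC
  apply intervalIntegral.continuousAt_of_dominated_interval (bound := fun _ => C)
  · filter_upwards with t
    have hg : Continuous fun s => g lam A B s := by unfold g; fun_prop
    exact (hg.measurable.mul (F_meas lam τ t)).aestronglyMeasurable
  · have hIio : Iio (t₀ + 1) ∈ nhds t₀ := Iio_mem_nhds (by linarith)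
    filter_upwards [hIio] with t ht
    filter_upwards with s hs
    rw [huIoc] at hs
    have hgb : |g lam A B s| ≤ |A| + |B| * Real.exp (2 * lam * Δ) := by
      unfold g
      calc |A + B * Real.exp (2 * lam * s)| ≤ |A| + |B * Real.exp (2 * lam * s)| := abs_add_le _ _
        _ ≤ |A| + |B| * Real.exp (2 * lam * Δ) := by
            rw [abs_mul, abs_of_pos (Real.exp_pos _)]
            have : Real.exp (2 * lam * s) ≤ Real.exp (2 * lam * Δ) :=
              Real.exp_le_exp.2 (by nlinarith [hs.1, hs.2])
            nlinarith [abs_nonneg B]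
    have hFb : |F lam τ t s| ≤ (1 + lam * Δ) * lam ^ 2 * (t₀ + 1) :=
      F_bound lam τ Δ s t (t₀ + 1) hlam (by linarith) hs.1 hs.2 ht.le
    rw [Real.norm_eq_abs, abs_mul]
    exact mul_le_mul hgb hFb (abs_nonneg _) (by positivity)
  · exact intervalIntegrable_const
  · have hne : ∀ᵐ s : ℝ, s ≠ t₀ := by
      refine ae_iff.2 ?_
      simp only [not_not, setOf_eq_eq_singleton]
      exact measure_singleton t₀
    filter_upwards [hne] with s hsne hs
    rw [huIoc] at hs
    exact continuousAt_const.mul (F_contAt lam τ s t₀ hs.1 h0 hτ (Ne.symm hsne))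

lemma F_tendsto_left (lam τ Δ : ℝ) (hΔ : 0 < Δ) :
    Tendsto (fun t => F lam τ t Δ) (nhdsWithin Δ (Iio Δ))
      (nhds (lam ^ 2 * Δ * Real.exp (-lam * Δ))) := by
  have hev : ∀ᶠ t in nhdsWithin Δ (Iio Δ),
      F lam τ t Δ = lam ^ 2 * t * Real.exp (-lam * t) := by
    filter_upwards [Ioo_mem_nhdsLT_of_mem (⟨hΔ, le_refl Δ⟩ : Δ ∈ Ioc (0:ℝ) Δ)] with t ht
    simp [F, ht.1, ht.2]
  have hc : Tendsto (fun t : ℝ => lam ^ 2 * t * Real.exp (-lam * t)) (nhdsWithin Δ (Iio Δ))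
      (nhds (lam ^ 2 * Δ * Real.exp (-lam * Δ))) :=
    (((by fun_prop : Continuous fun t : ℝ => lam ^ 2 * t * Real.exp (-lam * t)).tendsto
      Δ).mono_left nhdsWithin_le_nhds)
  exact Filter.Tendsto.congr' (Filter.EventuallyEq.symm hev) hc

lemma F_tendsto_right (lam τ Δ : ℝ) (hΔ : 0 < Δ) (hτ : 0 < τ) :
    Tendsto (fun t => F lam τ t Δ) (nhdsWithin Δ (Ioi Δ)) (nhds 0) := by
  have hev : ∀ᶠ t in nhdsWithin Δ (Ioi Δ), F lam τ t Δ =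
      (1 + lam * Δ) * Real.exp (-lam * Δ) *
        (lam ^ 2 * (t - Δ) * Real.exp (-lam * (t - Δ))) := by
    filter_upwards [Ioo_mem_nhdsGT_of_mem (⟨le_refl Δ, by linarith⟩ : Δ ∈ Ico Δ (Δ + τ))]
      with t ht
    have h1 : ¬ (0 < t ∧ t < Δ) := by push_neg; intro _; linarith [ht.1]
    have h2 : Δ ≤ t ∧ t ≤ Δ + τ := ⟨ht.1.le, ht.2.le⟩
    simp [F, h1, h2]
  have hc : Tendsto (fun t : ℝ => (1 + lam * Δ) * Real.exp (-lam * Δ) *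
      (lam ^ 2 * (t - Δ) * Real.exp (-lam * (t - Δ)))) (nhdsWithin Δ (Ioi Δ)) (nhds 0) := by
    have h0 : Tendsto (fun t : ℝ => (1 + lam * Δ) * Real.exp (-lam * Δ) *
        (lam ^ 2 * (t - Δ) * Real.exp (-lam * (t - Δ)))) (nhdsWithin Δ (Ioi Δ))
        (nhds ((1 + lam * Δ) * Real.exp (-lam * Δ) *
          (lam ^ 2 * (Δ - Δ) * Real.exp (-lam * (Δ - Δ))))) :=
      ((by fun_prop : Continuous fun t : ℝ => (1 + lam * Δ) * Real.exp (-lam * Δ) *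
        (lam ^ 2 * (t - Δ) * Real.exp (-lam * (t - Δ)))).tendsto Δ).mono_left
        nhdsWithin_le_nhds
    simpa using h0
  exact Filter.Tendsto.congr' (Filter.EventuallyEq.symm hev) hc


lemma aC_pos (lam Δ : ℝ) (hlam : 0 < lam) (hΔ : 0 < Δ) : 0 < aC lam Δ := by
  unfold aC
  apply div_pos (by positivity)
  nlinarith [Real.exp_pos (2 * lam * Δ), mul_pos hlam hΔ]


/-- the single-interval output density
`P(t) = ∫₀^Δ g(s) F(t,s) ds + a F(t,Δ)` is continuous on `(0,Δ) ∪ (Δ,τ)` and has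
one-sided limits at `t = Δ` with jump
(left limit) − (right limit) `= a λ² Δ e^{−λΔ} > 0`. -/
theorem stmt18 (lam Δ τ A B : ℝ) (hlam : 0 < lam) (hΔ : 0 < Δ) (hΔτ : Δ < τ) :
    (∀ t ∈ Set.Ioo (0 : ℝ) Δ ∪ Set.Ioo Δ τ,
      ContinuousAt
        (fun t => (∫ s in (0 : ℝ)..Δ, g lam A B s * F lam τ t s) + aC lam Δ * F lam τ t Δ)
        t) ∧
    ∃ L₁ L₂ : ℝ,
      Filter.Tendsto
        (fun t => (∫ s in (0 : ℝ)..Δ, g lam A B s * F lam τ t s) + aC lam Δ * F lam τ t Δ)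
        (nhdsWithin Δ (Set.Iio Δ)) (nhds L₁) ∧
      Filter.Tendsto
        (fun t => (∫ s in (0 : ℝ)..Δ, g lam A B s * F lam τ t s) + aC lam Δ * F lam τ t Δ)
        (nhdsWithin Δ (Set.Ioi Δ)) (nhds L₂) ∧
      L₁ - L₂ = aC lam Δ * (lam ^ 2 * Δ * Real.exp (-lam * Δ)) ∧
      0 < L₁ - L₂ := by
  constructor
  · rintro t (ht | ht)
    · exact (int_contAt lam Δ τ A B t hlam hΔ ht.1 (ht.2.trans hΔτ)).add
        (continuousAt_const.mul
          (F_contAt lam τ Δ t hΔ ht.1 (ht.2.trans hΔτ) (ne_of_lt ht.2)))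
    · exact (int_contAt lam Δ τ A B t hlam hΔ (hΔ.trans ht.1) ht.2).add
        (continuousAt_const.mul
          (F_contAt lam τ Δ t hΔ (hΔ.trans ht.1) ht.2 (ne_of_gt ht.1)))
  · set I : ℝ := ∫ s in (0 : ℝ)..Δ, g lam A B s * F lam τ Δ s with hI
    set X : ℝ := lam ^ 2 * Δ * Real.exp (-lam * Δ) with hX
    have hint : Tendsto (fun t => ∫ s in (0 : ℝ)..Δ, g lam A B s * F lam τ t s)
        (nhds Δ) (nhds I) := (int_contAt lam Δ τ A B Δ hlam hΔ hΔ hΔτ)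
    refine ⟨I + aC lam Δ * X, I, ?_, ?_, by ring, ?_⟩
    · exact (hint.mono_left nhdsWithin_le_nhds).add
        (tendsto_const_nhds.mul (F_tendsto_left lam τ Δ hΔ))
    · have h2 : Tendsto
          (fun t => (∫ s in (0 : ℝ)..Δ, g lam A B s * F lam τ t s) + aC lam Δ * F lam τ t Δ)
          (nhdsWithin Δ (Ioi Δ)) (nhds (I + aC lam Δ * 0)) :=
        (hint.mono_left nhdsWithin_le_nhds).add
          (tendsto_const_nhds.mul (F_tendsto_right lam τ Δ hΔ (hΔ.trans hΔτ)))
      simpa using h2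
    · have h1 : (I + aC lam Δ * X) - I = aC lam Δ * X := by ring
      rw [h1]
      exact mul_pos (aC_pos lam Δ hlam hΔ)
        (mul_pos (mul_pos (pow_pos hlam 2) hΔ) (Real.exp_pos _))
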